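/- For the matrices G_{ij} (identity except (i,i) entry t_j and (i,j) entry 1-t_i) over ℂ[t_1^{±1},…,t_n^{±1}], the relation (G_{ij}·G_{kj})·G_{ik} = G_{ik}·(G_{ij}·G_{kj}) holds for pairwise distinct indices i, j, k. -/

import Mathlib

/-- The multivariate Laurent polynomial ring `ℂ[t₁^{±1}, …, t_n^{±1}]`,
realized as the group algebra of `ℤⁿ` over `ℂ`. -/
abbrev LaurentRing (n : ℕ) := AddMonoidAlgebra ℂ (Fin n →₀ ℤ)

/-- The variable `t_j`. -/
noncomputable def tvar {n : ℕ} (j : Fin n) : LaurentRing n :=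
  AddMonoidAlgebra.single (Finsupp.single j 1) 1

/-- The extended Gassner matrix `G_{ij}`: identity except that the `(i,i)` entry
is `t_j` and the `(i,j)` entry is `1 - t_i`. -/
noncomputable def gassnerG {n : ℕ} (i j : Fin n) :
    Matrix (Fin n) (Fin n) (LaurentRing n) :=
  Matrix.of fun k l =>
    if k = i ∧ l = i then tvar j
    else if k = i ∧ l = j then 1 - tvar i
    else if k = l then 1 else 0

open Matrix in
/-- `G_{ij}` decomposed as identity plus elementary matrices. -/
lemma gassnerG_eq {n : ℕ} (i j : Fin n) (hij : i ≠ j) :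
    gassnerG i j = 1 + single i i (tvar j - 1)
      + single i j (1 - tvar i) := by
  ext a b
  simp only [gassnerG, Matrix.of_apply, Matrix.add_apply, Matrix.one_apply,
    Matrix.single, Matrix.of_apply]
  by_cases ha : a = i <;> by_cases hb : b = i <;> by_cases hb' : b = j <;>
    subst_vars <;> simp_all [eq_comm]

set_option maxHeartbeats 1000000 in
open Matrix in
/-- Third McCool relation: `G_{ij}·G_{kj}` commutes with `G_{ik}` for distinct `i, j, k`. -/
theorem mccool_relation_three (n : ℕ) (i j k : Fin n)
    (hij : i ≠ j) (hik : i ≠ k) (hjk : j ≠ k) :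
    (gassnerG i j * gassnerG k j) * gassnerG i k =
      gassnerG i k * (gassnerG i j * gassnerG k j) := by
  rw [gassnerG_eq i j hij, gassnerG_eq k j hjk.symm, gassnerG_eq i k hik]
  simp only [add_mul, mul_add, one_mul, mul_one,
    single_mul_single_same, single_mul_single_of_ne,
    hij, hik, hjk, hij.symm, hik.symm, hjk.symm, Ne, not_false_iff,
    add_zero, zero_add, mul_zero, zero_mul]
  ext a b
  simp only [Matrix.add_apply, Matrix.single, Matrix.of_apply, Matrix.one_apply]
  split_ifs <;> ring
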